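/- For every n ≥ 1, with m = n(n−1)/2, there exists an injective group homomorphism φ : UT(n,ℤ) → UT(m+1,ℤ) such that φ(g) is essentially hyperbolic for every g ≠ 1. -/

import Mathlib

section Matrices

variable {R : Type*} {n : ℕ}

theorem diag_mul_of_triangular [CommRing R] {A B : Matrix (Fin n) (Fin n) R}
    (hA : A.BlockTriangular id) (hB : B.BlockTriangular id) (i : Fin n) :
    (A * B) i i = A i i * B i i := by
  rw [Matrix.mul_apply]
  apply Finset.sum_eq_single i
  · intro k _ hk
    rcases lt_or_gt_of_ne hk with h | h
    · rw [hA (show (id : Fin n → Fin n) k < id i from h), zero_mul]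
    · rw [hB (show (id : Fin n → Fin n) i < id k from h), mul_zero]
  · intro h; exact absurd (Finset.mem_univ i) h

/-- The group `UT(n,R)` of upper triangular `n × n` matrices over `R` with all diagonal
entries equal to `1`, realised as a subgroup of the group of units of the matrix ring. -/
def UT (n : ℕ) (R : Type*) [CommRing R] : Subgroup (Matrix (Fin n) (Fin n) R)ˣ where
  carrier := {A | (∀ i j : Fin n, j < i → (A : Matrix (Fin n) (Fin n) R) i j = 0) ∧
    ∀ i : Fin n, (A : Matrix (Fin n) (Fin n) R) i i = 1}
  one_mem' := by
    refine ⟨fun i j hij => ?_, fun i => ?_⟩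
    · simp [Matrix.one_apply, (ne_of_lt hij).symm]
    · simp
  mul_mem' := by
    rintro A B ⟨hA1, hA2⟩ ⟨hB1, hB2⟩
    have hA : (A : Matrix (Fin n) (Fin n) R).BlockTriangular id := fun i j h => hA1 i j h
    have hB : (B : Matrix (Fin n) (Fin n) R).BlockTriangular id := fun i j h => hB1 i j h
    refine ⟨fun i j hij => ?_, fun i => ?_⟩
    · exact (hA.mul hB) (show (id : Fin n → Fin n) j < id i from hij)
    · rw [Units.val_mul, diag_mul_of_triangular hA hB, hA2, hB2, one_mul]
  inv_mem' := by
    rintro A ⟨hA1, hA2⟩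
    have hA : (A : Matrix (Fin n) (Fin n) R).BlockTriangular id := fun i j h => hA1 i j h
    haveI := A.invertible
    have hAinv : ((A : Matrix (Fin n) (Fin n) R)⁻¹).BlockTriangular id :=
      Matrix.blockTriangular_inv_of_blockTriangular hA
    have hcoe : ((A⁻¹ : (Matrix (Fin n) (Fin n) R)ˣ) : Matrix (Fin n) (Fin n) R)
        = (A : Matrix (Fin n) (Fin n) R)⁻¹ := Matrix.coe_units_inv A
    refine ⟨fun i j hij => ?_, fun i => ?_⟩
    · rw [hcoe]; exact hAinv (show (id : Fin n → Fin n) j < id i from hij)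
    · have h1 : ((A : Matrix (Fin n) (Fin n) R) * (A : Matrix (Fin n) (Fin n) R)⁻¹) i i = 1 := by
        rw [Matrix.mul_inv_of_invertible]; simp
      rw [diag_mul_of_triangular hA hAinv, hA2, one_mul] at h1
      rw [hcoe, h1]

/-- The group `T*(n,R)` of upper triangular `n × n` matrices over a linearly ordered field `R`
with positive diagonal entries, realised as a subgroup of the units of the matrix ring. -/
def Tstar (n : ℕ) (R : Type*) [Field R] [LinearOrder R] [IsStrictOrderedRing R] : Subgroup (Matrix (Fin n) (Fin n) R)ˣ where
  carrier := {A | (∀ i j : Fin n, j < i → (A : Matrix (Fin n) (Fin n) R) i j = 0) ∧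
    ∀ i : Fin n, 0 < (A : Matrix (Fin n) (Fin n) R) i i}
  one_mem' := by
    refine ⟨fun i j hij => ?_, fun i => ?_⟩
    · simp [Matrix.one_apply, (ne_of_lt hij).symm]
    · simp
  mul_mem' := by
    rintro A B ⟨hA1, hA2⟩ ⟨hB1, hB2⟩
    have hA : (A : Matrix (Fin n) (Fin n) R).BlockTriangular id := fun i j h => hA1 i j h
    have hB : (B : Matrix (Fin n) (Fin n) R).BlockTriangular id := fun i j h => hB1 i j h
    refine ⟨fun i j hij => ?_, fun i => ?_⟩
    · exact (hA.mul hB) (show (id : Fin n → Fin n) j < id i from hij)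
    · rw [Units.val_mul, diag_mul_of_triangular hA hB]
      exact mul_pos (hA2 i) (hB2 i)
  inv_mem' := by
    rintro A ⟨hA1, hA2⟩
    have hA : (A : Matrix (Fin n) (Fin n) R).BlockTriangular id := fun i j h => hA1 i j h
    haveI := A.invertible
    have hAinv : ((A : Matrix (Fin n) (Fin n) R)⁻¹).BlockTriangular id :=
      Matrix.blockTriangular_inv_of_blockTriangular hA
    have hcoe : ((A⁻¹ : (Matrix (Fin n) (Fin n) R)ˣ) : Matrix (Fin n) (Fin n) R)
        = (A : Matrix (Fin n) (Fin n) R)⁻¹ := Matrix.coe_units_inv A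
    refine ⟨fun i j hij => ?_, fun i => ?_⟩
    · rw [hcoe]; exact hAinv (show (id : Fin n → Fin n) j < id i from hij)
    · have h1 : ((A : Matrix (Fin n) (Fin n) R) * (A : Matrix (Fin n) (Fin n) R)⁻¹) i i = 1 := by
        rw [Matrix.mul_inv_of_invertible]; simp
      rw [diag_mul_of_triangular hA hAinv] at h1
      rw [hcoe]
      rcases lt_trichotomy ((A : Matrix (Fin n) (Fin n) R)⁻¹ i i) 0 with h | h | h
      · exact absurd h1 (by nlinarith [hA2 i])
      · rw [h, mul_zero] at h1; exact absurd h1 zero_ne_one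
      · exact h

/-- The last index of `Fin N` (any element of `Fin N` witnesses `0 < N`). -/
def lastOf {N : ℕ} (r : Fin N) : Fin N := ⟨N - 1, Nat.sub_lt r.pos Nat.one_pos⟩

/-- A square matrix `g` (upper triangular, with positive diagonal and bottom-right entry `1`)
is *essentially hyperbolic* if `g ≠ 1` and there is a row index `r` which is not the last row
such that `(g-1)_{r,N} ≠ 0` (where `N` is the last column) and every nonzero entry of `g - 1`
lies either in a row strictly above `r`, or at position `(r, N)`. -/
def EssentiallyHyperbolic {N : ℕ} {R : Type*} [CommRing R]
    (g : Matrix (Fin N) (Fin N) R) : Prop :=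
  g ≠ 1 ∧ ∃ r : Fin N, (r : ℕ) + 1 < N ∧ (g - 1) r (lastOf r) ≠ 0 ∧
    ∀ i j : Fin N, (g - 1) i j ≠ 0 → i < r ∨ (i = r ∧ j = lastOf r)

end Matrices

/-- The (multiplicative) group structure on `AddAut A` that the older Mathlib provided:
`f * g = g.trans f`, `1 = refl`, `f⁻¹ = f.symm`. -/
instance addAutMulGroup (A : Type*) [Add A] : Group (AddAut A) where
  mul g h := AddEquiv.trans h g
  one := AddEquiv.refl _
  inv := AddEquiv.symm
  mul_assoc _ _ _ := rfl
  one_mul _ := rfl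
  mul_one _ := rfl
  inv_mul_cancel := AddEquiv.self_trans_symm

/-- The group of order-preserving additive automorphisms of a linearly ordered abelian
group `Λ`, as a subgroup of `AddAut Λ`. -/
def orderAddAut (Λ : Type*) [AddCommGroup Λ] [LinearOrder Λ] [IsOrderedAddMonoid Λ] : Subgroup (AddAut Λ) where
  carrier := {f | StrictMono f}
  one_mem' := strictMono_id
  mul_mem' := by
    intro f g hf hg a b hab
    exact hf (hg hab)
  inv_mem' := by
    intro f hf a b hab
    exact hf.lt_iff_lt.1 (by simpa [show ∀ x, f (f⁻¹ x) = x from f.apply_symm_apply] using hab)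

namespace EH

structure Pos (n : ℕ) where
  i : Fin n
  j : Fin n
  hij : i < j

instance {n : ℕ} : DecidableEq (Pos n) := fun a b =>
  decidable_of_iff (a.i = b.i ∧ a.j = b.j) (by
    constructor
    · rintro ⟨h1, h2⟩; cases a; cases b; simp_all
    · rintro rfl; exact ⟨rfl, rfl⟩)

def posEquiv (n : ℕ) : Pos n ≃ Σ j : Fin n, Fin j.val where
  toFun a := ⟨a.j, ⟨a.i, a.hij⟩⟩
  invFun x := ⟨⟨x.2.val, x.2.isLt.trans x.1.isLt⟩, x.1, x.2.isLt⟩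
  left_inv a := rfl
  right_inv x := rfl

instance {n : ℕ} : Fintype (Pos n) := Fintype.ofEquiv _ (posEquiv n).symm

def sig (k : ℕ) : ℕ := ∑ t ∈ Finset.range k, t

lemma sig_succ (k : ℕ) : sig (k + 1) = sig k + k := Finset.sum_range_succ _ _

lemma sig_mono {j k : ℕ} (h : j ≤ k) : sig j ≤ sig k :=
  Finset.sum_le_sum_of_subset (Finset.range_subset_range.2 h)

def keyP {n : ℕ} (a : Pos n) : ℕ := (sig n - sig (a.j.val + 1)) + a.i.val

lemma keyP_lt {n : ℕ} (a : Pos n) : keyP a < sig n := by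
  have h1 : sig (a.j.val + 1) = sig a.j.val + a.j.val := sig_succ _
  have h2 : sig (a.j.val + 1) ≤ sig n := sig_mono a.j.isLt
  have h3 : a.i.val < a.j.val := a.hij
  simp only [keyP]
  omega

lemma keyP_lt_keyP {n : ℕ} (a b : Pos n) :
    keyP a < keyP b ↔ b.j < a.j ∨ (a.j = b.j ∧ a.i < b.i) := by
  have h1 : sig (a.j.val + 1) = sig a.j.val + a.j.val := sig_succ _
  have h1' : sig (b.j.val + 1) = sig b.j.val + b.j.val := sig_succ _
  have h2 : sig (a.j.val + 1) ≤ sig n := sig_mono a.j.isLt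
  have h2' : sig (b.j.val + 1) ≤ sig n := sig_mono b.j.isLt
  have ha : a.i.val < a.j.val := a.hij
  have hb : b.i.val < b.j.val := b.hij
  simp only [keyP, Fin.lt_def, Fin.ext_iff]
  rcases lt_trichotomy a.j.val b.j.val with h | h | h
  · have h3 : sig (a.j.val + 1) ≤ sig b.j.val := sig_mono h
    constructor
    · intro hk; omega
    · intro hk; omega
  · have h4 : sig (a.j.val + 1) = sig (b.j.val + 1) := by rw [h]
    constructor
    · intro hk; omega
    · intro hk; omega
  · have h3 : sig (b.j.val + 1) ≤ sig a.j.val := sig_mono h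
    constructor
    · intro hk; omega
    · intro hk; omega

lemma keyP_inj {n : ℕ} : Function.Injective (keyP (n := n)) := by
  intro a b h
  by_contra hne
  have hne2 : a.j ≠ b.j ∨ (a.j = b.j ∧ a.i ≠ b.i) := by
    by_cases h2 : a.j = b.j
    · refine Or.inr ⟨h2, fun h1 => hne ?_⟩
      cases a; cases b; simp_all
    · exact Or.inl h2
  rcases hne2 with h2 | ⟨h2, h1⟩
  · rcases h2.lt_or_gt with h3 | h3
    · have := (keyP_lt_keyP b a).2 (Or.inl h3); omega
    · have := (keyP_lt_keyP a b).2 (Or.inl h3); omega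
  · rcases h1.lt_or_gt with h3 | h3
    · have := (keyP_lt_keyP a b).2 (Or.inr ⟨h2, h3⟩); omega
    · have := (keyP_lt_keyP b a).2 (Or.inr ⟨h2.symm, h3⟩); omega

instance {n : ℕ} : LinearOrder (Pos n) := LinearOrder.lift' keyP keyP_inj

lemma posLe_iff {n : ℕ} {a b : Pos n} : a ≤ b ↔ keyP a ≤ keyP b := Iff.rfl

lemma posLt_iff {n : ℕ} {a b : Pos n} : a < b ↔ keyP a < keyP b := by
  constructor
  · intro h
    exact lt_of_le_of_ne (posLe_iff.1 h.le) (fun he => h.ne (keyP_inj he))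
  · intro h
    exact lt_of_le_of_ne (posLe_iff.2 h.le) (fun he => h.ne (congrArg keyP he))

instance {n : ℕ} : Fintype (WithTop (Pos n)) := inferInstanceAs (Fintype (Option (Pos n)))

lemma card_P (n : ℕ) : Fintype.card (Pos n) = n * (n - 1) / 2 := by
  rw [Fintype.card_congr (posEquiv n), Fintype.card_sigma]
  simp only [Fintype.card_fin]
  rw [show (∑ x : Fin n, (x : ℕ)) = ∑ i ∈ Finset.range n, i from
    Fin.sum_univ_eq_sum_range (fun i => i) n, Finset.sum_range_id]

lemma card_I (n : ℕ) : Fintype.card (WithTop (Pos n)) = n * (n - 1) / 2 + 1 := by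
  rw [show Fintype.card (WithTop (Pos n)) = Fintype.card (Option (Pos n)) from rfl,
    Fintype.card_option, card_P]

/-- The order isomorphism from `Fin (m+1)` to the index type. -/
def eIso (n : ℕ) : Fin (n * (n - 1) / 2 + 1) ≃o WithTop (Pos n) :=
  monoEquivOfFin _ (card_I n)

lemma sum_idx {n : ℕ} (f : WithTop (Pos n) → ℤ) :
    ∑ x : WithTop (Pos n), f x = f ⊤ + ∑ a : Pos n, f (a : WithTop (Pos n)) :=
  Fintype.sum_option f


def M (n : ℕ) (h : Matrix (Fin n) (Fin n) ℤ) :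
    Matrix (WithTop (Pos n)) (WithTop (Pos n)) ℤ :=
  fun p q =>
    p.recTopCoe (q.recTopCoe 1 fun _ => 0)
      (fun a => q.recTopCoe (h a.i a.j)
        (fun b => if b.i = a.i then h b.j a.j else 0))

variable {n : ℕ} {h : Matrix (Fin n) (Fin n) ℤ}

@[simp] lemma M_tt : M n h ⊤ ⊤ = 1 := rfl
@[simp] lemma M_tc (b : Pos n) : M n h ⊤ (b : WithTop (Pos n)) = 0 := rfl
@[simp] lemma M_ct (a : Pos n) : M n h (a : WithTop (Pos n)) ⊤ = h a.i a.j := rfl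
@[simp] lemma M_cc (a b : Pos n) :
    M n h (a : WithTop (Pos n)) (b : WithTop (Pos n)) =
      if b.i = a.i then h b.j a.j else 0 := rfl

lemma sum_pos (g : Fin n × Fin n → ℤ) :
    ∑ a : Pos n, g (a.i, a.j) = ∑ x : Fin n, ∑ y : Fin n, if x < y then g (x, y) else 0 := by
  have e1 : ∑ a : Pos n, g (a.i, a.j)
      = ∑ r : {p : Fin n × Fin n // p.1 < p.2}, g r.val := by
    apply Fintype.sum_equiv ⟨fun (a : Pos n) => (⟨(a.i, a.j), a.hij⟩ : {p : Fin n × Fin n // p.1 < p.2}),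
      fun r => ⟨r.1.1, r.1.2, r.2⟩, fun a => rfl, fun r => rfl⟩
    intro a; rfl
  rw [e1, ← Finset.sum_subtype (Finset.univ.filter (fun p : Fin n × Fin n => p.1 < p.2))
    (by intro x; simp) (fun p => g p), Finset.sum_filter]
  exact Fintype.sum_prod_type (f := fun p : Fin n × Fin n => if p.1 < p.2 then g p else 0)

lemma M_mul (a b : Matrix (Fin n) (Fin n) ℤ)
    (hb1 : ∀ i j : Fin n, j < i → b i j = 0) (hb2 : ∀ i, b i i = 1) :
    M n (b * a) = M n a * M n b := by
  ext p q
  rw [Matrix.mul_apply, sum_idx (fun x => M n a p x * M n b x q)]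
  induction p using WithTop.recTopCoe with
  | top =>
    induction q using WithTop.recTopCoe with
    | top => simp
    | coe b' => simp
  | coe a' =>
    induction q using WithTop.recTopCoe with
    | top =>
      simp only [M_ct, M_tt, mul_one, M_cc]
      have e2 : ∑ r : Pos n, (if r.i = a'.i then a r.j a'.j else 0) * b r.i r.j
          = ∑ x : Fin n, ∑ y : Fin n,
            if x < y then (if x = a'.i then a y a'.j else 0) * b x y else 0 :=
        sum_pos (fun p => (if p.1 = a'.i then a p.2 a'.j else 0) * b p.1 p.2)
      rw [e2]
      have e3 : ∑ x : Fin n, ∑ y : Fin n,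
            (if x < y then (if x = a'.i then a y a'.j else 0) * b x y else 0)
          = ∑ y : Fin n, if a'.i < y then a y a'.j * b a'.i y else 0 := by
        rw [Finset.sum_eq_single a'.i]
        · apply Finset.sum_congr rfl
          intro y _
          by_cases hy : a'.i < y <;> simp [hy]
        · intro x _ hx
          apply Finset.sum_eq_zero
          intro y _
          simp [hx]
        · intro hmem; exact absurd (Finset.mem_univ _) hmem
      rw [e3, Matrix.mul_apply]
      have e4 : ∀ y : Fin n, b a'.i y * a y a'.j
          = (if a'.i < y then a y a'.j * b a'.i y else 0)
            + (if y = a'.i then a a'.i a'.j else 0) := by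
        intro y
        rcases lt_trichotomy a'.i y with hy | hy | hy
        · rw [if_pos hy, if_neg (fun hc : y = a'.i => absurd hc.symm hy.ne), mul_comm, add_zero]
        · rw [if_neg (hy ▸ lt_irrefl a'.i), if_pos hy.symm, ← hy, hb2, one_mul, zero_add]
        · rw [if_neg (fun hc : a'.i < y => absurd (hy.trans hc) (lt_irrefl _)),
            if_neg (fun hc : y = a'.i => absurd hc.symm hy.ne'), hb1 _ _ hy, zero_mul, add_zero]
      rw [Finset.sum_congr rfl (fun y _ => e4 y), Finset.sum_add_distrib,
        Finset.sum_ite_eq' Finset.univ a'.i (fun _ => a a'.i a'.j)]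
      simp [add_comm]
    | coe b' =>
      simp only [M_cc, M_ct, M_tc, mul_zero]
      have e2 : ∑ r : Pos n, (if r.i = a'.i then a r.j a'.j else 0)
            * (if b'.i = r.i then b b'.j r.j else 0)
          = ∑ x : Fin n, ∑ y : Fin n, if x < y then
              (if x = a'.i then a y a'.j else 0) * (if b'.i = x then b b'.j y else 0) else 0 :=
        sum_pos (fun p => (if p.1 = a'.i then a p.2 a'.j else 0)
          * (if b'.i = p.1 then b b'.j p.2 else 0))
      rw [e2]
      by_cases hib : b'.i = a'.i
      · have e3 : ∑ x : Fin n, ∑ y : Fin n, (if x < y then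
              (if x = a'.i then a y a'.j else 0) * (if b'.i = x then b b'.j y else 0) else 0)
            = ∑ y : Fin n, if a'.i < y then a y a'.j * b b'.j y else 0 := by
          rw [Finset.sum_eq_single a'.i]
          · apply Finset.sum_congr rfl
            intro y _
            by_cases hy : a'.i < y <;> simp [hy, hib]
          · intro x _ hx
            apply Finset.sum_eq_zero
            intro y _
            simp [hx]
          · intro hmem; exact absurd (Finset.mem_univ _) hmem
        rw [e3, if_pos hib, Matrix.mul_apply, zero_add]
        apply Finset.sum_congr rfl
        intro y _
        rcases lt_or_ge a'.i y with hy | hy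
        · rw [if_pos hy, mul_comm]
        · rw [if_neg (not_lt.2 hy)]
          have hyb : y < b'.j := lt_of_le_of_lt hy (hib ▸ b'.hij)
          rw [hb1 _ _ hyb, zero_mul]
      · rw [if_neg hib, zero_add]
        symm
        apply Finset.sum_eq_zero
        intro x _
        apply Finset.sum_eq_zero
        intro y _
        by_cases hx : x = a'.i
        · simp [hx, hib]
        · simp [hx]

lemma M_one : M n (1 : Matrix (Fin n) (Fin n) ℤ) = 1 := by
  ext p q
  induction p using WithTop.recTopCoe with
  | top =>
    induction q using WithTop.recTopCoe with
    | top => rw [M_tt, Matrix.one_apply_eq]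
    | coe b' => rw [M_tc, Matrix.one_apply_ne (by simp)]
  | coe a' =>
    induction q using WithTop.recTopCoe with
    | top =>
      rw [M_ct, Matrix.one_apply_ne a'.hij.ne, Matrix.one_apply_ne (by simp)]
    | coe b' =>
      rw [M_cc]
      by_cases h1 : b'.i = a'.i
      · by_cases h2 : b'.j = a'.j
        · have hab : a' = b' := by cases a'; cases b'; simp_all
          rw [if_pos h1, h2, Matrix.one_apply_eq, hab, Matrix.one_apply_eq]
        · rw [if_pos h1, Matrix.one_apply_ne (fun hc => h2 hc),
            Matrix.one_apply_ne (fun hc => h2 (by cases (WithTop.coe_inj.1 hc); rfl))]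
      · rw [if_neg h1, eq_comm, Matrix.one_apply_ne
          (fun hc => h1 (by cases (WithTop.coe_inj.1 hc); rfl))]


abbrev mm (n : ℕ) : ℕ := n * (n - 1) / 2

lemma ut_prop {n : ℕ} {u : (Matrix (Fin n) (Fin n) ℤ)ˣ} (hu : u ∈ UT n ℤ) :
    (∀ i j : Fin n, j < i → (u : Matrix (Fin n) (Fin n) ℤ) i j = 0) ∧
    (∀ i : Fin n, (u : Matrix (Fin n) (Fin n) ℤ) i i = 1) := hu

def hinv (n : ℕ) (u : UT n ℤ) : Matrix (Fin n) (Fin n) ℤ :=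
  (((u⁻¹ : UT n ℤ) : (Matrix (Fin n) (Fin n) ℤ)ˣ) : Matrix (Fin n) (Fin n) ℤ)

def phiMat (n : ℕ) (u : UT n ℤ) : Matrix (Fin (mm n + 1)) (Fin (mm n + 1)) ℤ :=
  (M n (hinv n u)).submatrix (eIso n) (eIso n)

lemma hinv_mul (n : ℕ) (u v : UT n ℤ) : hinv n (u * v) = hinv n v * hinv n u := by
  unfold hinv
  rw [mul_inv_rev]
  rfl

lemma hinv_one (n : ℕ) : hinv n (1 : UT n ℤ) = 1 := by
  unfold hinv
  rw [inv_one]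
  rfl

lemma phiMat_mul (n : ℕ) (u v : UT n ℤ) :
    phiMat n (u * v) = phiMat n u * phiMat n v := by
  have hb : (∀ i j : Fin n, j < i → hinv n v i j = 0) ∧ (∀ i : Fin n, hinv n v i i = 1) :=
    ut_prop (v⁻¹ : UT n ℤ).2
  unfold phiMat
  rw [hinv_mul, M_mul (hinv n u) (hinv n v) hb.1 hb.2,
    ← Matrix.submatrix_mul_equiv (M n (hinv n u)) (M n (hinv n v)) _ (eIso n).toEquiv _]
  rfl

lemma phiMat_one (n : ℕ) : phiMat n 1 = 1 := by
  unfold phiMat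
  rw [hinv_one, M_one]
  exact Matrix.submatrix_one_equiv (eIso n).toEquiv

lemma M_lower {n : ℕ} {h : Matrix (Fin n) (Fin n) ℤ}
    (h1 : ∀ i j : Fin n, j < i → h i j = 0)
    {x y : WithTop (Pos n)} (hxy : y < x) : M n h x y = 0 := by
  induction x using WithTop.recTopCoe with
  | top =>
    induction y using WithTop.recTopCoe with
    | top => exact absurd hxy (lt_irrefl _)
    | coe b => rw [M_tc]
  | coe a =>
    induction y using WithTop.recTopCoe with
    | top => exact absurd hxy not_top_lt
    | coe b =>
      rw [M_cc]
      by_cases hib : b.i = a.i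
      · rw [if_pos hib]
        have hk : keyP b < keyP a := posLt_iff.1 (WithTop.coe_lt_coe.1 hxy)
        rcases (keyP_lt_keyP b a).1 hk with hj | ⟨_, hi⟩
        · exact h1 _ _ hj
        · exact absurd hi (by rw [hib]; exact lt_irrefl _)
      · rw [if_neg hib]

lemma M_diag {n : ℕ} {h : Matrix (Fin n) (Fin n) ℤ}
    (h2 : ∀ i : Fin n, h i i = 1) (x : WithTop (Pos n)) : M n h x x = 1 := by
  induction x using WithTop.recTopCoe with
  | top => rfl
  | coe a => rw [M_cc, if_pos rfl, h2]

def phiU (n : ℕ) (u : UT n ℤ) : (Matrix (Fin (mm n + 1)) (Fin (mm n + 1)) ℤ)ˣ where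
  val := phiMat n u
  inv := phiMat n u⁻¹
  val_inv := by rw [← phiMat_mul, mul_inv_cancel, phiMat_one]
  inv_val := by rw [← phiMat_mul, inv_mul_cancel, phiMat_one]

lemma phiU_mem (n : ℕ) (u : UT n ℤ) : phiU n u ∈ UT (mm n + 1) ℤ := by
  have hprop : (∀ i j : Fin n, j < i → hinv n u i j = 0) ∧ (∀ i : Fin n, hinv n u i i = 1) :=
    ut_prop (u⁻¹ : UT n ℤ).2
  have hmem : (∀ p q : Fin (mm n + 1), q < p → (phiU n u : Matrix _ _ ℤ) p q = 0) ∧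
      (∀ p : Fin (mm n + 1), (phiU n u : Matrix _ _ ℤ) p p = 1) := by
    constructor
    · intro p q hqp
      show M n (hinv n u) ((eIso n) p) ((eIso n) q) = 0
      exact M_lower hprop.1 ((eIso n).strictMono hqp)
    · intro p
      show M n (hinv n u) ((eIso n) p) ((eIso n) p) = 1
      exact M_diag hprop.2 _
  exact hmem

def phi (n : ℕ) : UT n ℤ →* UT (mm n + 1) ℤ where
  toFun u := ⟨phiU n u, phiU_mem n u⟩
  map_one' := Subtype.ext (Units.ext (phiMat_one n))
  map_mul' u v := Subtype.ext (Units.ext (phiMat_mul n u v))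

lemma phi_inj (n : ℕ) : Function.Injective (phi n) := by
  rw [injective_iff_map_eq_one]
  intro u hu
  have h0 := congrArg (Subtype.val) hu
  have h1 : phiMat n u = 1 := congrArg Units.val h0
  have hM : ∀ x y : WithTop (Pos n), M n (hinv n u) x y
      = (1 : Matrix (Fin (mm n + 1)) (Fin (mm n + 1)) ℤ) ((eIso n).symm x) ((eIso n).symm y) := by
    intro x y
    have h2 := congrFun (congrFun h1 ((eIso n).symm x)) ((eIso n).symm y)
    rw [show phiMat n u ((eIso n).symm x) ((eIso n).symm y)
      = M n (hinv n u) ((eIso n) ((eIso n).symm x)) ((eIso n) ((eIso n).symm y)) from rfl,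
      OrderIso.apply_symm_apply, OrderIso.apply_symm_apply] at h2
    exact h2
  have hprop : (∀ i j : Fin n, j < i → hinv n u i j = 0) ∧ (∀ i : Fin n, hinv n u i i = 1) :=
    ut_prop (u⁻¹ : UT n ℤ).2
  have h2 : hinv n u = 1 := by
    ext i j
    rcases lt_trichotomy i j with hij | hij | hij
    · have h3 := hM ((⟨i, j, hij⟩ : Pos n) : WithTop (Pos n)) ⊤
      rw [M_ct, Matrix.one_apply_ne (fun hc => WithTop.coe_ne_top
        ((eIso n).symm.injective hc))] at h3
      rw [h3, Matrix.one_apply_ne hij.ne]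
    · subst hij
      rw [hprop.2, Matrix.one_apply_eq]
    · rw [hprop.1 _ _ hij, Matrix.one_apply_ne hij.ne']
  have h4 : (u⁻¹ : UT n ℤ) = 1 := Subtype.ext (Units.ext h2)
  exact inv_eq_one.1 h4

lemma phi_EH (n : ℕ) (g : UT n ℤ) (hg : g ≠ 1) : EssentiallyHyperbolic (phiMat n g) := by
  classical
  set h : Matrix (Fin n) (Fin n) ℤ := hinv n g with hdef
  have hprop : (∀ i j : Fin n, j < i → h i j = 0) ∧ (∀ i : Fin n, h i i = 1) :=
    ut_prop (g⁻¹ : UT n ℤ).2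
  have hne : h ≠ 1 := by
    intro hh
    exact hg (inv_eq_one.1 (Subtype.ext (Units.ext hh)))
  have hex : ∃ a : Pos n, h a.i a.j ≠ 0 := by
    by_contra hc
    push_neg at hc
    apply hne
    ext i j
    rcases lt_trichotomy i j with hij | hij | hij
    · rw [hc ⟨i, j, hij⟩, Matrix.one_apply_ne hij.ne]
    · subst hij
      rw [hprop.2, Matrix.one_apply_eq]
    · rw [hprop.1 _ _ hij, Matrix.one_apply_ne hij.ne']
  obtain ⟨a0, ha0⟩ := hex
  set Q : Fin n → Prop := fun j => ∃ i : Fin n, i < j ∧ h i j ≠ 0 with hQdef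
  set s : Finset (Fin n) := Finset.univ.filter Q with hsdef
  have hs : s.Nonempty := ⟨a0.j, Finset.mem_filter.2 ⟨Finset.mem_univ _, ⟨a0.i, a0.hij, ha0⟩⟩⟩
  set jstar := s.min' hs with hjdef
  have hjQ : Q jstar := (Finset.mem_filter.1 (s.min'_mem hs)).2
  have hjmin : ∀ j, Q j → jstar ≤ j := fun j hj =>
    s.min'_le j (Finset.mem_filter.2 ⟨Finset.mem_univ _, hj⟩)
  set t : Finset (Fin n) := Finset.univ.filter (fun i => i < jstar ∧ h i jstar ≠ 0) with htdef
  have ht : t.Nonempty := by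
    obtain ⟨i, hi1, hi2⟩ := hjQ
    exact ⟨i, Finset.mem_filter.2 ⟨Finset.mem_univ _, hi1, hi2⟩⟩
  set kstar := t.max' ht with hkdef
  have hkmem : kstar < jstar ∧ h kstar jstar ≠ 0 :=
    (Finset.mem_filter.1 (t.max'_mem ht)).2
  have hkmax : ∀ i, i < jstar → h i jstar ≠ 0 → i ≤ kstar := fun i h1 h2 =>
    t.le_max' i (Finset.mem_filter.2 ⟨Finset.mem_univ _, h1, h2⟩)
  set astar : Pos n := ⟨kstar, jstar, hkmem.1⟩ with hadef
  set r : Fin (mm n + 1) := (eIso n).symm (astar : WithTop (Pos n)) with hrdef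
  -- basic facts about the top element
  have htople : ∀ p : Fin (mm n + 1), p ≤ (eIso n).symm ⊤ := fun p => by
    rw [OrderIso.le_symm_apply]
    exact le_top
  have hlastval : (eIso n).symm ⊤ = Fin.last (mm n) :=
    le_antisymm (Fin.le_last _) (htople (Fin.last _))
  have hlastOf : lastOf r = (eIso n).symm ⊤ := by
    rw [hlastval]
    rfl
  have hrlt : r < (eIso n).symm ⊤ :=
    (eIso n).symm.strictMono (WithTop.coe_lt_top astar)
  -- entries of phiMat g - 1 in terms of M
  have entry : ∀ p q : Fin (mm n + 1), (phiMat n g - 1) p q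
      = M n h ((eIso n) p) ((eIso n) q)
        - (1 : Matrix (WithTop (Pos n)) (WithTop (Pos n)) ℤ) ((eIso n) p) ((eIso n) q) := by
    intro p q
    have h1 : (1 : Matrix (Fin (mm n + 1)) (Fin (mm n + 1)) ℤ) p q
        = (1 : Matrix (WithTop (Pos n)) (WithTop (Pos n)) ℤ) ((eIso n) p) ((eIso n) q) := by
      by_cases hpq : p = q
      · subst hpq
        rw [Matrix.one_apply_eq, Matrix.one_apply_eq]
      · rw [Matrix.one_apply_ne hpq,
          Matrix.one_apply_ne (fun hc => hpq ((eIso n).injective hc))]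
    rw [Matrix.sub_apply, h1]
    rfl
  have cond2 : (phiMat n g - 1) r (lastOf r) ≠ 0 := by
    rw [entry, hlastOf, hrdef, OrderIso.apply_symm_apply, OrderIso.apply_symm_apply,
      M_ct, Matrix.one_apply_ne (WithTop.coe_ne_top), sub_zero]
    exact hkmem.2
  refine ⟨?_, ⟨r, ?_, cond2, ?_⟩⟩
  · intro hX
    apply cond2
    rw [hX, sub_self]
    rfl
  · have h6 : r < Fin.last (mm n) := by rw [← hlastval]; exact hrlt
    have h7 : (r : ℕ) < mm n := h6
    omega
  · -- condition 3
    have key3 : ∀ x y : WithTop (Pos n),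
        M n h x y - (1 : Matrix (WithTop (Pos n)) (WithTop (Pos n)) ℤ) x y ≠ 0 →
        ((eIso n).symm x < r ∨ ((eIso n).symm x = r ∧ (eIso n).symm y = lastOf r)) := by
      intro x y hne2
      induction x using WithTop.recTopCoe with
      | top =>
        exfalso
        apply hne2
        induction y using WithTop.recTopCoe with
        | top => rw [M_tt, Matrix.one_apply_eq, sub_self]
        | coe b => rw [M_tc, Matrix.one_apply_ne (fun hc => WithTop.coe_ne_top hc.symm), sub_zero]
      | coe a =>
        induction y using WithTop.recTopCoe with
        | top =>
          rw [M_ct, Matrix.one_apply_ne WithTop.coe_ne_top, sub_zero] at hne2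
          -- h a.i a.j ≠ 0
          have hQa : Q a.j := ⟨a.i, a.hij, hne2⟩
          have hjle : jstar ≤ a.j := hjmin _ hQa
          rcases eq_or_lt_of_le hjle with hjeq | hjlt
          · -- same column
            have hkle : a.i ≤ kstar := hkmax a.i (hjeq ▸ a.hij) (hjeq ▸ hne2)
            rcases eq_or_lt_of_le hkle with hkeq | hklt
            · right
              refine ⟨?_, hlastOf.symm⟩
              have haa : a = astar := by
                have h1 : a.i = kstar := hkeq
                have h2 : a.j = jstar := hjeq.symm
                obtain ⟨ai, aj, hija⟩ := a
                have h1' : ai = kstar := h1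
                have h2' : aj = jstar := h2
                subst h1'; subst h2'; rfl
              rw [haa, hrdef]
            · left
              apply (eIso n).symm.strictMono
              rw [WithTop.coe_lt_coe, posLt_iff]
              exact (keyP_lt_keyP a astar).2 (Or.inr ⟨hjeq.symm, hklt⟩)
          · left
            apply (eIso n).symm.strictMono
            rw [WithTop.coe_lt_coe, posLt_iff]
            exact (keyP_lt_keyP a astar).2 (Or.inl hjlt)
        | coe b =>
          by_cases hab : a = b
          · exfalso
            apply hne2
            subst hab
            rw [M_cc, if_pos rfl, hprop.2, Matrix.one_apply_eq, sub_self]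
          · rw [M_cc, Matrix.one_apply_ne (fun hc => hab (WithTop.coe_inj.1 hc)),
              sub_zero] at hne2
            have hbi : b.i = a.i := by
              by_contra hbi
              rw [if_neg hbi] at hne2
              exact hne2 rfl
            rw [if_pos hbi] at hne2
            have hbj : b.j < a.j := by
              rcases lt_trichotomy b.j a.j with hc | hc | hc
              · exact hc
              · exfalso
                apply hab
                cases a; cases b; simp_all
              · exact absurd (hprop.1 _ _ hc) hne2
            have hQa : Q a.j := ⟨b.j, hbj, hne2⟩
            have hjle : jstar ≤ a.j := hjmin _ hQa
            left
            apply (eIso n).symm.strictMono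
            rw [WithTop.coe_lt_coe, posLt_iff]
            rcases eq_or_lt_of_le hjle with hjeq | hjlt
            · have hble : b.j ≤ kstar := hkmax b.j (hjeq ▸ hbj) (hjeq ▸ hne2)
              have hai : a.i < kstar := lt_of_lt_of_le (hbi ▸ b.hij) hble
              exact (keyP_lt_keyP a astar).2 (Or.inr ⟨hjeq.symm, hai⟩)
            · exact (keyP_lt_keyP a astar).2 (Or.inl hjlt)
    intro p q hpq
    rw [entry] at hpq
    have h5 := key3 ((eIso n) p) ((eIso n) q) hpq
    rwa [OrderIso.symm_apply_apply, OrderIso.symm_apply_apply] at h5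

end EH

/-- For `n ≥ 1` and `m = n(n-1)/2` there is an injective group homomorphism
`φ : UT(n,ℤ) → UT(m+1,ℤ)` such that `φ g` is essentially hyperbolic for every `g ≠ 1`. -/
theorem UT_int_embeds_essentiallyHyperbolically (n : ℕ) (hn : 1 ≤ n) :
    ∃ φ : UT n ℤ →* UT (n * (n - 1) / 2 + 1) ℤ,
      Function.Injective φ ∧
      ∀ g : UT n ℤ, g ≠ 1 →
        EssentiallyHyperbolic
          (((φ g : UT (n * (n - 1) / 2 + 1) ℤ) :
              (Matrix (Fin (n * (n - 1) / 2 + 1)) (Fin (n * (n - 1) / 2 + 1)) ℤ)ˣ) :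
            Matrix (Fin (n * (n - 1) / 2 + 1)) (Fin (n * (n - 1) / 2 + 1)) ℤ) := by
  refine ⟨EH.phi n, EH.phi_inj n, ?_⟩
  intro g hg
  exact EH.phi_EH n g hg
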